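/- Assume μ₂ ≥ μ₁ and h₁/μ₁ ≥ h₂/μ₂. Fix k, ℓ with k + ℓ = C₁, k ≥ 1 and ℓ ≥ C₂. Then: (1) D(i,k,ℓ) − D(i+1,k,ℓ) ≥ 0 for all i ≥ 0, i.e. i ↦ D(i,k,ℓ) is non-increasing; (2) there exists a natural number N such that for all i ≥ 0, D(i,k,ℓ) ≤ 0 if and only if i ≥ N, and moreover D(i,k,ℓ) < 0 for all sufficiently large i. -/

import Mathlib

/-- Overall service rate `d(k,ℓ) = k·μ₁ + min(ℓ,C₂)·μ₂`. -/
noncomputable def dRate (C₂ : ℕ) (μ₁ μ₂ : ℝ) (k ℓ : ℕ) : ℝ :=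
  (k : ℝ) * μ₁ + ((min ℓ C₂ : ℕ) : ℝ) * μ₂

/-- Membership of `(i,k,ℓ)` in the state space `X`. -/
def memX (C₁ : ℕ) (i k ℓ : ℕ) : Prop :=
  (i = 0 ∧ k + ℓ < C₁) ∨ k + ℓ = C₁

/-- `v` satisfies the optimality (Bellman) equations of the clearing system.
Terms whose coefficient `k·μ₁` or `min(ℓ,C₂)·μ₂` vanishes contribute `0`,
matching the convention that such summands are omitted. -/
def IsValue (C₁ C₂ : ℕ) (μ₁ μ₂ h₀ h₁ h₂ : ℝ) (v : ℕ → ℕ → ℕ → ℝ) : Prop :=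
  v 0 0 0 = 0 ∧
  (∀ k ℓ : ℕ, k + ℓ ≤ C₁ → ¬(k = 0 ∧ ℓ = 0) →
    v 0 k ℓ = ((k : ℝ) * h₁ + (ℓ : ℝ) * h₂) / dRate C₂ μ₁ μ₂ k ℓ
      + ((k : ℝ) * μ₁ / dRate C₂ μ₁ μ₂ k ℓ) * v 0 (k - 1) ℓ
      + (((min ℓ C₂ : ℕ) : ℝ) * μ₂ / dRate C₂ μ₁ μ₂ k ℓ) * v 0 k (ℓ - 1)) ∧
  (∀ i k ℓ : ℕ, k + ℓ = C₁ →
    v (i + 1) k ℓ =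
      (((i : ℝ) + 1) * h₀ + (k : ℝ) * h₁ + (ℓ : ℝ) * h₂) / dRate C₂ μ₁ μ₂ k ℓ
      + ((k : ℝ) * μ₁ / dRate C₂ μ₁ μ₂ k ℓ) *
          min (v i k ℓ) (v i (k - 1) (ℓ + 1))
      + (((min ℓ C₂ : ℕ) : ℝ) * μ₂ / dRate C₂ μ₁ μ₂ k ℓ) *
          min (v i (k + 1) (ℓ - 1)) (v i k ℓ))

/-- The difference `D(i,k,ℓ) = v(i,k,ℓ) − v(i,k−1,ℓ+1)`. -/
noncomputable def Dv (v : ℕ → ℕ → ℕ → ℝ) (i k ℓ : ℕ) : ℝ :=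
  v i k ℓ - v i (k - 1) (ℓ + 1)

private lemma min_shift (a b : ℝ) : min a b = b + min (a - b) 0 := by
  rcases le_total a b with h|h
  · rw [min_eq_left h, min_eq_left (by linarith : a - b ≤ (0:ℝ))]; ring
  · rw [min_eq_right h, min_eq_right (by linarith : (0:ℝ) ≤ a - b)]; ring

private lemma min_shift' (a b : ℝ) : min a b = a + min (b - a) 0 := by
  rw [min_comm]; exact min_shift b a

private lemma phi_mono {x y : ℝ} (h : x ≤ y) : min x 0 ≤ min y 0 := min_le_min h le_rfl

private lemma phi_lip {x δ : ℝ} (h : 0 ≤ δ) : min (x + δ) 0 ≤ min x 0 + δ := by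
  simp only [min_def]
  split_ifs <;> linarith

private lemma phi_ge {x δ : ℝ} (h : δ ≤ 0) : min x 0 + δ ≤ min (x + δ) 0 := by
  simp only [min_def]
  split_ifs <;> linarith

/-- `g(ℓ)`, the closed form of the swap difference at the bottom layer. -/
private noncomputable def Gf (C₂ : ℕ) (μ₁ μ₂ h₁ h₂ : ℝ) (ℓ : ℕ) : ℝ :=
  h₁/μ₁ - h₂/μ₂ - ((ℓ + 1 - C₂ : ℕ) : ℝ) * h₂ / ((C₂:ℝ)*μ₂)

private lemma Gf_pred (C₂ : ℕ) (μ₁ μ₂ h₁ h₂ : ℝ) (hC₂ : 1 ≤ C₂) (hμ₂ : 0 < μ₂)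
    {ℓ : ℕ} (hℓ : C₂ ≤ ℓ) :
    Gf C₂ μ₁ μ₂ h₁ h₂ (ℓ-1) = Gf C₂ μ₁ μ₂ h₁ h₂ ℓ + h₂ / ((C₂:ℝ)*μ₂) := by
  have hC2 : (0:ℝ) < (C₂:ℝ)*μ₂ := by positivity
  simp only [Gf]
  rw [show ℓ - 1 + 1 - C₂ = ℓ - C₂ by omega, show ℓ + 1 - C₂ = (ℓ - C₂) + 1 by omega]
  push_cast
  field_simp
  ring

private lemma v0_unsat (C₁ C₂ : ℕ) (μ₁ μ₂ h₀ h₁ h₂ : ℝ)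
    (hμ₁ : 0 < μ₁) (hμ₂ : 0 < μ₂)
    (v : ℕ → ℕ → ℕ → ℝ) (hv : IsValue C₁ C₂ μ₁ μ₂ h₀ h₁ h₂ v) :
    ∀ s k ℓ, k + ℓ = s → s ≤ C₁ → ℓ ≤ C₂ →
      v 0 k ℓ = (k:ℝ)*(h₁/μ₁) + (ℓ:ℝ)*(h₂/μ₂) := by
  intro s
  induction s using Nat.strong_induction_on with
  | _ s ih =>
    intro k ℓ hs hsC hlC
    rcases Nat.eq_zero_or_pos k with hk0 | hk1
    · subst hk0
      rcases Nat.eq_zero_or_pos ℓ with hl0 | hl1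
      · subst hl0; simp [hv.1]
      · have e := hv.2.1 0 ℓ (by omega) (by omega)
        have hmin : min ℓ C₂ = ℓ := by omega
        have hd : dRate C₂ μ₁ μ₂ 0 ℓ = (ℓ:ℝ)*μ₂ := by
          rw [dRate, hmin]; push_cast; ring
        rw [hmin, hd] at e
        have ihl := ih (s-1) (by omega) 0 (ℓ-1) (by omega) (by omega) (by omega)
        rw [ihl] at e
        rw [e]
        have hld : ((ℓ - 1 : ℕ):ℝ) = (ℓ:ℝ) - 1 := by
          rw [Nat.cast_sub hl1, Nat.cast_one]
        rw [hld]
        have hℓ0 : (0:ℝ) < (ℓ:ℝ) := by exact_mod_cast hl1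
        field_simp
        ring
    · rcases Nat.eq_zero_or_pos ℓ with hl0 | hl1
      · subst hl0
        have e := hv.2.1 k 0 (by omega) (by omega)
        have hmin : min 0 C₂ = 0 := by omega
        have hd : dRate C₂ μ₁ μ₂ k 0 = (k:ℝ)*μ₁ := by
          rw [dRate, hmin]; push_cast; ring
        rw [hmin, hd] at e
        have ihk := ih (s-1) (by omega) (k-1) 0 (by omega) (by omega) (by omega)
        rw [ihk] at e
        rw [e]
        have hkd : ((k - 1 : ℕ):ℝ) = (k:ℝ) - 1 := by
          rw [Nat.cast_sub hk1, Nat.cast_one]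
        rw [hkd]
        have hk0 : (0:ℝ) < (k:ℝ) := by exact_mod_cast hk1
        push_cast
        field_simp
        ring
      · have e := hv.2.1 k ℓ (by omega) (by omega)
        have hmin : min ℓ C₂ = ℓ := by omega
        have hd : dRate C₂ μ₁ μ₂ k ℓ = (k:ℝ)*μ₁ + (ℓ:ℝ)*μ₂ := by
          rw [dRate, hmin]
        rw [hmin, hd] at e
        have ihk := ih (s-1) (by omega) (k-1) ℓ (by omega) (by omega) (by omega)
        have ihl := ih (s-1) (by omega) k (ℓ-1) (by omega) (by omega) (by omega)
        rw [ihk, ihl] at e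
        rw [e]
        have hkd : ((k - 1 : ℕ):ℝ) = (k:ℝ) - 1 := by
          rw [Nat.cast_sub hk1, Nat.cast_one]
        have hld : ((ℓ - 1 : ℕ):ℝ) = (ℓ:ℝ) - 1 := by
          rw [Nat.cast_sub hl1, Nat.cast_one]
        rw [hkd, hld]
        have hk0 : (0:ℝ) < (k:ℝ) := by exact_mod_cast hk1
        have hℓ0 : (0:ℝ) < (ℓ:ℝ) := by exact_mod_cast hl1
        have hdpos : (0:ℝ) < (k:ℝ)*μ₁ + (ℓ:ℝ)*μ₂ := by positivity
        field_simp
        ring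
private lemma v0_swap (C₁ C₂ : ℕ) (μ₁ μ₂ h₀ h₁ h₂ : ℝ)
    (hμ₁ : 0 < μ₁) (hμ₂ : 0 < μ₂) (hC₂ : 1 ≤ C₂)
    (v : ℕ → ℕ → ℕ → ℝ) (hv : IsValue C₁ C₂ μ₁ μ₂ h₀ h₁ h₂ v) :
    ∀ s k ℓ, k + ℓ = s → s ≤ C₁ → 1 ≤ k →
      v 0 k ℓ - v 0 (k-1) (ℓ+1) = Gf C₂ μ₁ μ₂ h₁ h₂ ℓ := by
  intro s
  induction s using Nat.strong_induction_on with
  | _ s ih =>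
    intro k ℓ hs hsC hk1
    by_cases hun : ℓ + 1 ≤ C₂
    · -- unsaturated: both closed forms
      rw [v0_unsat C₁ C₂ μ₁ μ₂ h₀ h₁ h₂ hμ₁ hμ₂ v hv s k ℓ hs hsC (by omega),
          v0_unsat C₁ C₂ μ₁ μ₂ h₀ h₁ h₂ hμ₁ hμ₂ v hv s (k-1) (ℓ+1) (by omega) hsC (by omega)]
      simp only [Gf]
      rw [show ℓ + 1 - C₂ = 0 by omega]
      rw [Nat.cast_sub hk1]
      push_cast
      have : μ₁ ≠ 0 := ne_of_gt hμ₁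
      have : μ₂ ≠ 0 := ne_of_gt hμ₂
      field_simp
      ring
    · -- saturated : C₂ ≤ ℓ
      have hsat : C₂ ≤ ℓ := by omega
      have hl1 : 1 ≤ ℓ := by omega
      have hdk : dRate C₂ μ₁ μ₂ k ℓ = (k:ℝ)*μ₁ + (C₂:ℝ)*μ₂ := by
        rw [dRate, show min ℓ C₂ = C₂ by omega]
      have hdk1 : dRate C₂ μ₁ μ₂ (k-1) (ℓ+1) = ((k-1:ℕ):ℝ)*μ₁ + (C₂:ℝ)*μ₂ := by
        rw [dRate, show min (ℓ+1) C₂ = C₂ by omega]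
      have hmink : min ℓ C₂ = C₂ := by omega
      have hminl : min (ℓ+1) C₂ = C₂ := by omega
      have e1 := hv.2.1 k ℓ (by omega) (by omega)
      have e2 := hv.2.1 (k-1) (ℓ+1) (by omega) (by omega)
      rw [hmink, hdk] at e1
      rw [hminl, hdk1] at e2
      rw [show ℓ + 1 - 1 = ℓ by omega] at e2
      -- ih at (k, ℓ-1) : v 0 k (ℓ-1) - v 0 (k-1) (ℓ-1+1) = Gf (ℓ-1)
      have ih2 := ih (s-1) (by omega) k (ℓ-1) (by omega) (by omega) hk1
      rw [show ℓ - 1 + 1 = ℓ by omega] at ih2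
      have hGf : Gf C₂ μ₁ μ₂ h₁ h₂ (ℓ-1) = Gf C₂ μ₁ μ₂ h₁ h₂ ℓ + h₂ / ((C₂:ℝ)*μ₂) :=
        Gf_pred C₂ μ₁ μ₂ h₁ h₂ hC₂ hμ₂ hsat
      rw [hGf] at ih2
      have hck : ((k - 1 : ℕ):ℝ) = (k:ℝ) - 1 := by
        rw [Nat.cast_sub hk1, Nat.cast_one]
      have hdpos : (0:ℝ) < (k:ℝ)*μ₁ + (C₂:ℝ)*μ₂ := by positivity
      have hk0 : (1:ℝ) ≤ (k:ℝ) := by exact_mod_cast hk1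
      have hd1pos : (0:ℝ) < ((k:ℝ)-1)*μ₁ + (C₂:ℝ)*μ₂ := by
        have : (0:ℝ) ≤ ((k:ℝ)-1)*μ₁ := by
          apply mul_nonneg (by linarith) (le_of_lt hμ₁)
        have : (0:ℝ) < (C₂:ℝ)*μ₂ := by positivity
        linarith
      have hGcast : ((ℓ + 1 - C₂ : ℕ):ℝ) = (ℓ:ℝ) + 1 - (C₂:ℝ) := by
        rw [Nat.cast_sub (by omega : C₂ ≤ ℓ + 1)]; push_cast; ring
      by_cases hk2 : 2 ≤ k
      · -- main case k ≥ 2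
        have ih1 := ih (s-1) (by omega) (k-1) ℓ (by omega) (by omega) (by omega)
        -- e1 : v 0 k ℓ = ... v 0 (k-1) ℓ ... v 0 k (ℓ-1)
        -- e2 : v 0 (k-1) (ℓ+1) = ... v 0 (k-1-1) (ℓ+1) ... v 0 (k-1) ℓ
        -- ih1 : v 0 (k-1) ℓ - v 0 (k-1-1) (ℓ+1) = Gf ℓ
        -- ih2 : v 0 k (ℓ-1) - v 0 (k-1) ℓ = Gf ℓ + h₂/(C₂μ₂)
        have ha : v 0 k (ℓ-1) = v 0 (k-1) ℓ + (Gf C₂ μ₁ μ₂ h₁ h₂ ℓ + h₂ / ((C₂:ℝ)*μ₂)) := by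
          linarith [ih2]
        have hb : v 0 (k-1) ℓ = v 0 (k-1-1) (ℓ+1) + Gf C₂ μ₁ μ₂ h₁ h₂ ℓ := by
          linarith [ih1]
        rw [e1, e2, ha, hb]
        simp only [Gf]
        rw [hGcast, hck]
        have hcℓ : (C₂:ℝ) ≤ (ℓ:ℝ) := by exact_mod_cast hsat
        have hC2pos : (0:ℝ) < (C₂:ℝ)*μ₂ := by positivity
        have hd1ne : ((k:ℝ)-1)*μ₁ + (C₂:ℝ)*μ₂ ≠ 0 := hd1pos.ne'
        push_cast
        generalize hD : ((k:ℝ)-1)*μ₁ + (C₂:ℝ)*μ₂ = D at hd1ne ⊢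
        field_simp
        rw [← hD]
        ring
      · -- k = 1
        have hkeq : k = 1 := by omega
        subst hkeq
        simp only [show (1:ℕ) - 1 = 0 from rfl] at e2 ⊢
        -- e2 : v 0 0 (ℓ+1) = ((0)*h₁+(ℓ+1)h₂)/(0*μ₁+C₂μ₂) + (0*μ₁/..)*v 0 (0-1) (ℓ+1) + (C₂μ₂/..)*v 0 0 ℓ
        simp only [Nat.cast_zero, zero_mul, zero_div, zero_add, zero_sub, Nat.zero_sub] at e2
        have ha : v 0 1 (ℓ-1) = v 0 0 ℓ + (Gf C₂ μ₁ μ₂ h₁ h₂ ℓ + h₂ / ((C₂:ℝ)*μ₂)) := by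
          simp only [show (1:ℕ) - 1 = 0 from rfl] at ih2
          linarith [ih2]
        rw [e1, e2, ha]
        simp only [Gf]
        rw [hGcast]
        have hC2pos : (0:ℝ) < (C₂:ℝ)*μ₂ := by positivity
        have hd1 : (0:ℝ) < (1:ℝ)*μ₁ + (C₂:ℝ)*μ₂ := by positivity
        push_cast
        field_simp
        ring
private lemma wstep (μ₁ μ₂ h₀ : ℝ) (hμ₁ : 0 < μ₁) (hμ₂ : 0 < μ₂) (hh₀ : 0 < h₀)
    (C₂ : ℕ) (hC₂ : 1 ≤ C₂) (P W : ℕ → ℝ) (j : ℕ) (hj : 1 ≤ j)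
    (hWm : W (j-1) = h₀/(((j-1:ℕ):ℝ)*μ₁+(C₂:ℝ)*μ₂)
        + (((j-1:ℕ):ℝ)*μ₁/(((j-1:ℕ):ℝ)*μ₁+(C₂:ℝ)*μ₂))*P (j-1)
        + ((C₂:ℝ)*μ₂/(((j-1:ℕ):ℝ)*μ₁+(C₂:ℝ)*μ₂))*P j)
    (hWj : W j = h₀/((j:ℝ)*μ₁+(C₂:ℝ)*μ₂)
        + ((j:ℝ)*μ₁/((j:ℝ)*μ₁+(C₂:ℝ)*μ₂))*P j
        + ((C₂:ℝ)*μ₂/((j:ℝ)*μ₁+(C₂:ℝ)*μ₂))*P (j+1))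
    (hP1 : ((j:ℝ)-1)*μ₁*(P j - P (j-1)) ≤ 0) (hP2 : P (j+1) ≤ P j) :
    h₀*μ₁/(((((j-1:ℕ)):ℝ)*μ₁+(C₂:ℝ)*μ₂)*((j:ℝ)*μ₁+(C₂:ℝ)*μ₂)) ≤ W (j-1) - W j := by
  have hck : ((j - 1 : ℕ):ℝ) = (j:ℝ) - 1 := by
    rw [Nat.cast_sub hj, Nat.cast_one]
  have hj1 : (1:ℝ) ≤ (j:ℝ) := by exact_mod_cast hj
  have hd1 : (0:ℝ) < ((j:ℝ)-1)*μ₁ + (C₂:ℝ)*μ₂ := by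
    have h1 : (0:ℝ) ≤ ((j:ℝ)-1)*μ₁ := mul_nonneg (by linarith) (le_of_lt hμ₁)
    have h2 : (0:ℝ) < (C₂:ℝ)*μ₂ := by positivity
    linarith
  have hd2 : (0:ℝ) < (j:ℝ)*μ₁ + (C₂:ℝ)*μ₂ := by
    have h2 : (0:ℝ) < (C₂:ℝ)*μ₂ := by positivity
    nlinarith
  rw [hWm, hWj, hck]
  have key : (h₀/(((j:ℝ)-1)*μ₁+(C₂:ℝ)*μ₂)
        + ((((j:ℝ)-1)*μ₁)/(((j:ℝ)-1)*μ₁+(C₂:ℝ)*μ₂))*P (j-1)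
        + ((C₂:ℝ)*μ₂/(((j:ℝ)-1)*μ₁+(C₂:ℝ)*μ₂))*P j)
      - (h₀/((j:ℝ)*μ₁+(C₂:ℝ)*μ₂)
        + ((j:ℝ)*μ₁/((j:ℝ)*μ₁+(C₂:ℝ)*μ₂))*P j
        + ((C₂:ℝ)*μ₂/((j:ℝ)*μ₁+(C₂:ℝ)*μ₂))*P (j+1))
      = h₀*μ₁/((((j:ℝ)-1)*μ₁+(C₂:ℝ)*μ₂)*((j:ℝ)*μ₁+(C₂:ℝ)*μ₂))
        + (1/(((j:ℝ)-1)*μ₁+(C₂:ℝ)*μ₂)) * (-(((j:ℝ)-1)*μ₁*(P j - P (j-1))))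
        + ((C₂:ℝ)*μ₂/((j:ℝ)*μ₁+(C₂:ℝ)*μ₂)) * (P j - P (j+1)) := by
    field_simp
    ring
  rw [key]
  have t1 : 0 ≤ (1/(((j:ℝ)-1)*μ₁+(C₂:ℝ)*μ₂)) * (-(((j:ℝ)-1)*μ₁*(P j - P (j-1)))) := by
    apply mul_nonneg (by positivity) (by linarith)
  have t2 : 0 ≤ ((C₂:ℝ)*μ₂/((j:ℝ)*μ₁+(C₂:ℝ)*μ₂)) * (P j - P (j+1)) := by
    apply mul_nonneg (by positivity) (by linarith)
  linarith
set_option maxHeartbeats 1000000 in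
theorem stmt3
    (C₁ C₂ : ℕ) (hC₂pos : 1 ≤ C₂) (hC : C₂ < C₁)
    (μ₁ μ₂ h₀ h₁ h₂ : ℝ)
    (hμ₁ : 0 < μ₁) (hμ₂ : 0 < μ₂)
    (hh₀ : 0 < h₀) (hh₁ : 0 < h₁) (hh₂ : 0 < h₂)
    (v : ℕ → ℕ → ℕ → ℝ) (hv : IsValue C₁ C₂ μ₁ μ₂ h₀ h₁ h₂ v)
    (hμ : μ₁ ≤ μ₂) (hcost : h₂ / μ₂ ≤ h₁ / μ₁)
    (k ℓ : ℕ) (hkl : k + ℓ = C₁) (hk : 1 ≤ k) (hℓ : C₂ ≤ ℓ) :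
    (∀ i : ℕ, 0 ≤ Dv v i k ℓ - Dv v (i + 1) k ℓ) ∧
    ∃ N : ℕ, (∀ i : ℕ, Dv v i k ℓ ≤ 0 ↔ N ≤ i) ∧
      ∃ I : ℕ, ∀ i : ℕ, I ≤ i → Dv v i k ℓ < 0 := by
  have hle : ℓ = C₁ - k := by omega
  subst hle
  obtain ⟨hv00, hv0, hvi⟩ := hv
  have hvfull : IsValue C₁ C₂ μ₁ μ₂ h₀ h₁ h₂ v := ⟨hv00, hv0, hvi⟩
  have hC2R : (0:ℝ) < (C₂:ℝ) := by exact_mod_cast hC₂pos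
  have hC2μ : (0:ℝ) < (C₂:ℝ)*μ₂ := mul_pos hC2R hμ₂
  set K := C₁ - C₂ with hKdef
  have hkK : k ≤ K := by omega
  have hK1 : 1 ≤ K := by omega
  have hKC : K < C₁ := by omega
  have hdpos : ∀ r : ℕ, (0:ℝ) < (r:ℝ)*μ₁+(C₂:ℝ)*μ₂ := by
    intro r
    have : (0:ℝ) ≤ (r:ℝ)*μ₁ := by positivity
    linarith
  have hds : ∀ j : ℕ, j ≤ K → dRate C₂ μ₁ μ₂ j (C₁ - j) = (j:ℝ)*μ₁+(C₂:ℝ)*μ₂ := by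
    intro j hj; rw [dRate, show min (C₁-j) C₂ = C₂ by omega]
  have hcross : h₂*μ₁ ≤ h₁*μ₂ := by
    rw [div_le_div_iff₀ hμ₂ hμ₁] at hcost; linarith
  have swap := v0_swap C₁ C₂ μ₁ μ₂ h₀ h₁ h₂ hμ₁ hμ₂ hC₂pos v hvfull
  have bD0 : ∀ j : ℕ, 1 ≤ j → j ≤ C₁ →
      v 0 j (C₁-j) - v 0 (j-1) (C₁-j+1) = Gf C₂ μ₁ μ₂ h₁ h₂ (C₁-j) :=
    fun j h1 h2 => swap C₁ j (C₁-j) (by omega) le_rfl h1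
  have hGge : ∀ m : ℕ, m + 1 ≤ C₂ → 0 ≤ Gf C₂ μ₁ μ₂ h₁ h₂ m := by
    intro m h
    simp only [Gf]
    rw [show m+1-C₂ = 0 by omega]
    have e1 : h₂/μ₂ ≤ h₁/μ₁ := hcost
    push_cast
    rw [zero_mul, zero_div]
    linarith
  -- S : monotonicity of V i in j for j > K
  have S : ∀ i j, K < j → j ≤ C₁ → v i (j-1) (C₁-(j-1)) ≤ v i j (C₁-j) := by
    intro i
    induction i with
    | zero =>
      intro j hj1 hj2
      have h1j : 1 ≤ j := by omega
      have e := bD0 j h1j hj2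
      rw [show C₁ - j + 1 = C₁ - (j-1) by omega] at e
      have := hGge (C₁-j) (by omega)
      linarith
    | succ i ihS =>
      intro j hj1 hj2
      have h1j : 1 ≤ j := by omega
      -- upper bound for row (j-1)
      have e2 := hvi i (j-1) (C₁-(j-1)) (by omega)
      have e1 := hvi i j (C₁-j) (by omega)
      have dpos2 : 0 < dRate C₂ μ₁ μ₂ (j-1) (C₁-(j-1)) := by
        rw [dRate]
        have t1 : (1:ℝ) ≤ ((j-1:ℕ):ℝ) := by exact_mod_cast (by omega : 1 ≤ j-1)
        have t2 : (0:ℝ) ≤ ((min (C₁-(j-1)) C₂ : ℕ):ℝ)*μ₂ := by positivity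
        nlinarith
      have dpos1 : 0 < dRate C₂ μ₁ μ₂ j (C₁-j) := by
        rw [dRate]
        have t1 : (1:ℝ) ≤ ((j:ℕ):ℝ) := by exact_mod_cast (by omega : 1 ≤ j)
        have t2 : (0:ℝ) ≤ ((min (C₁-j) C₂ : ℕ):ℝ)*μ₂ := by positivity
        nlinarith
      have hub : v (i+1) (j-1) (C₁-(j-1)) ≤
          (((i:ℝ)+1)*h₀ + ((j-1:ℕ):ℝ)*h₁ + ((C₁-(j-1):ℕ):ℝ)*h₂)/dRate C₂ μ₁ μ₂ (j-1) (C₁-(j-1))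
            + v i (j-1) (C₁-(j-1)) := by
        rw [e2]
        have m1 : min (v i (j-1) (C₁-(j-1))) (v i (j-1-1) (C₁-(j-1)+1)) ≤ v i (j-1) (C₁-(j-1)) :=
          min_le_left _ _
        have m2 : min (v i (j-1+1) (C₁-(j-1)-1)) (v i (j-1) (C₁-(j-1))) ≤ v i (j-1) (C₁-(j-1)) :=
          min_le_right _ _
        have ha : 0 ≤ ((j-1:ℕ):ℝ)*μ₁/dRate C₂ μ₁ μ₂ (j-1) (C₁-(j-1)) := by
          apply div_nonneg (by positivity) dpos2.le
        have hb : 0 ≤ ((min (C₁-(j-1)) C₂:ℕ):ℝ)*μ₂/dRate C₂ μ₁ μ₂ (j-1) (C₁-(j-1)) := by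
          apply div_nonneg (by positivity) dpos2.le
        have hsum : ((j-1:ℕ):ℝ)*μ₁/dRate C₂ μ₁ μ₂ (j-1) (C₁-(j-1))
            + ((min (C₁-(j-1)) C₂:ℕ):ℝ)*μ₂/dRate C₂ μ₁ μ₂ (j-1) (C₁-(j-1)) = 1 := by
          rw [← add_div, dRate, div_self (by rw [dRate] at dpos2; exact ne_of_gt dpos2)]
        have q1 := mul_le_mul_of_nonneg_left m1 ha
        have q2 := mul_le_mul_of_nonneg_left m2 hb
        have q3 : ((j-1:ℕ):ℝ)*μ₁/dRate C₂ μ₁ μ₂ (j-1) (C₁-(j-1)) * v i (j-1) (C₁-(j-1))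
            + ((min (C₁-(j-1)) C₂:ℕ):ℝ)*μ₂/dRate C₂ μ₁ μ₂ (j-1) (C₁-(j-1)) * v i (j-1) (C₁-(j-1))
            = v i (j-1) (C₁-(j-1)) := by
          rw [← add_mul, hsum, one_mul]
        linarith
      -- lower bound for row j
      have hm1 : min (v i j (C₁-j)) (v i (j-1) (C₁-j+1)) = v i (j-1) (C₁-j+1) := by
        apply min_eq_right
        rw [show C₁-j+1 = C₁-(j-1) by omega]
        exact ihS j hj1 hj2
      have hlb : (((i:ℝ)+1)*h₀ + (j:ℝ)*h₁ + ((C₁-j:ℕ):ℝ)*h₂)/dRate C₂ μ₁ μ₂ j (C₁-j)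
            + v i (j-1) (C₁-j+1) ≤ v (i+1) j (C₁-j) := by
        rw [e1, hm1]
        have ha : 0 ≤ (j:ℝ)*μ₁/dRate C₂ μ₁ μ₂ j (C₁-j) := by
          apply div_nonneg (by positivity) dpos1.le
        have hb : 0 ≤ ((min (C₁-j) C₂:ℕ):ℝ)*μ₂/dRate C₂ μ₁ μ₂ j (C₁-j) := by
          apply div_nonneg (by positivity) dpos1.le
        have hsum : (j:ℝ)*μ₁/dRate C₂ μ₁ μ₂ j (C₁-j)
            + ((min (C₁-j) C₂:ℕ):ℝ)*μ₂/dRate C₂ μ₁ μ₂ j (C₁-j) = 1 := by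
          rw [← add_div, dRate, div_self (by rw [dRate] at dpos1; exact ne_of_gt dpos1)]
        rcases Nat.lt_or_ge j C₁ with hjlt | hjge
        · -- j < C₁ : second min ≥ v i (j-1) (C₁-j+1)
          have m2 : v i (j-1) (C₁-j+1) ≤ min (v i (j+1) (C₁-j-1)) (v i j (C₁-j)) := by
            apply le_min
            · have hstep := ihS (j+1) (by omega) (by omega)
              rw [show (j+1)-1 = j by omega] at hstep
              have hstep0 : v i (j-1) (C₁-(j-1)) ≤ v i j (C₁-j) := ihS j hj1 hj2
              rw [show C₁-j+1 = C₁-(j-1) by omega, show C₁-j-1 = C₁-(j+1) by omega]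
              linarith
            · rw [show C₁-j+1 = C₁-(j-1) by omega]
              exact ihS j hj1 hj2
          have q2 := mul_le_mul_of_nonneg_left m2 hb
          have q3 : (j:ℝ)*μ₁/dRate C₂ μ₁ μ₂ j (C₁-j) * v i (j-1) (C₁-j+1)
              + ((min (C₁-j) C₂:ℕ):ℝ)*μ₂/dRate C₂ μ₁ μ₂ j (C₁-j) * v i (j-1) (C₁-j+1)
              = v i (j-1) (C₁-j+1) := by
            rw [← add_mul, hsum, one_mul]
          linarith
        · -- j = C₁ : coefficient of second min is 0
          have hjeq : j = C₁ := by omega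
          have hz : min (C₁-j) C₂ = 0 := by omega
          rw [hz]
          simp only [Nat.cast_zero, zero_mul, zero_div]
          have hsum' : (j:ℝ)*μ₁/dRate C₂ μ₁ μ₂ j (C₁-j) = 1 := by
            rw [dRate, hz]
            simp only [Nat.cast_zero, zero_mul, add_zero]
            rw [div_self]
            have t1 : (1:ℝ) ≤ ((j:ℕ):ℝ) := by exact_mod_cast (by omega : 1 ≤ j)
            nlinarith
          rw [hsum']
          simp
      -- cost ratio comparison
      have hcc : (((i:ℝ)+1)*h₀ + ((j-1:ℕ):ℝ)*h₁ + ((C₁-(j-1):ℕ):ℝ)*h₂)/dRate C₂ μ₁ μ₂ (j-1) (C₁-(j-1))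
          ≤ (((i:ℝ)+1)*h₀ + (j:ℝ)*h₁ + ((C₁-j:ℕ):ℝ)*h₂)/dRate C₂ μ₁ μ₂ j (C₁-j) := by
        have hd1 : dRate C₂ μ₁ μ₂ (j-1) (C₁-(j-1)) = ((j-1:ℕ):ℝ)*μ₁+((C₁-(j-1):ℕ):ℝ)*μ₂ := by
          rw [dRate, show min (C₁-(j-1)) C₂ = C₁-(j-1) by omega]
        have hd2 : dRate C₂ μ₁ μ₂ j (C₁-j) = (j:ℝ)*μ₁+((C₁-j:ℕ):ℝ)*μ₂ := by
          rw [dRate, show min (C₁-j) C₂ = C₁-j by omega]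
        have dp2 : (0:ℝ) < ((j-1:ℕ):ℝ)*μ₁+((C₁-(j-1):ℕ):ℝ)*μ₂ := hd1 ▸ dpos2
        have dp1 : (0:ℝ) < (j:ℝ)*μ₁+((C₁-j:ℕ):ℝ)*μ₂ := hd2 ▸ dpos1
        rw [hd1, hd2, div_le_div_iff₀ dp2 dp1]
        rw [show C₁-(j-1) = C₁-j+1 by omega]
        push_cast [Nat.cast_sub h1j, Nat.cast_sub (show j ≤ C₁ by omega)]
        have A1 : (0:ℝ) ≤ (C₁:ℝ)*(h₁*μ₂ - h₂*μ₁) := by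
          apply mul_nonneg (by positivity) (by linarith)
        have A2 : (0:ℝ) ≤ ((i:ℝ)+1)*h₀*(μ₂-μ₁) := by
          apply mul_nonneg (by positivity) (by linarith)
        nlinarith [A1, A2]
      rw [show C₁-j+1 = C₁-(j-1) by omega] at hlb
      linarith
  -- quantitative left-monotonicity of increments
  have hεnn : ∀ a b : ℕ, (0:ℝ) ≤ h₀*μ₁/(((a:ℝ)*μ₁+(C₂:ℝ)*μ₂)*((b:ℝ)*μ₁+(C₂:ℝ)*μ₂)) :=
    fun a b => div_nonneg (by positivity) (le_of_lt (mul_pos (hdpos a) (hdpos b)))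
  have M : ∀ i j, 1 ≤ j → j ≤ K →
      h₀*μ₁/((((j-1:ℕ):ℝ)*μ₁+(C₂:ℝ)*μ₂)*((j:ℝ)*μ₁+(C₂:ℝ)*μ₂))
        ≤ (v (i+1) (j-1) (C₁-(j-1)) - v i (j-1) (C₁-(j-1)))
          - (v (i+1) j (C₁-j) - v i j (C₁-j)) := by
    intro i
    induction i with
    | zero =>
      intro j hj1 hjK
      have hW0 : ∀ m, m ≤ K → v (0+1) m (C₁-m) - v 0 m (C₁-m)
          = h₀/((m:ℝ)*μ₁+(C₂:ℝ)*μ₂)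
            + ((m:ℝ)*μ₁/((m:ℝ)*μ₁+(C₂:ℝ)*μ₂))
              * (min (v 0 m (C₁-m)) (v 0 (m-1) (C₁-m+1)) - v 0 (m-1) (C₁-m))
            + ((C₂:ℝ)*μ₂/((m:ℝ)*μ₁+(C₂:ℝ)*μ₂))
              * (min (v 0 (m+1) (C₁-(m+1))) (v 0 (m+1-1) (C₁-(m+1)+1)) - v 0 (m+1-1) (C₁-(m+1))) := by
        intro m hm
        have et := hvi 0 m (C₁-m) (by omega)
        have eb := hv0 m (C₁-m) (by omega) (by omega)
        rw [hds m hm, show min (C₁-m) C₂ = C₂ by omega] at et eb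
        rw [show m+1-1 = m by omega, show C₁-(m+1)+1 = C₁-m by omega,
            show C₁-(m+1) = C₁-m-1 by omega]
        push_cast at et eb ⊢
        linear_combination et - eb
      have Pm0 : ∀ m, 1 ≤ m → m ≤ K →
          (min (v 0 (m+1) (C₁-(m+1))) (v 0 (m+1-1) (C₁-(m+1)+1)) - v 0 (m+1-1) (C₁-(m+1)))
            ≤ (min (v 0 m (C₁-m)) (v 0 (m-1) (C₁-m+1)) - v 0 (m-1) (C₁-m)) := by
        intro m h1 h2
        rw [show m+1-1 = m by omega, show C₁-(m+1)+1 = C₁-m by omega]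
        have s1 := bD0 m h1 (by omega)
        have s2 := bD0 (m+1) (by omega) (by omega)
        rw [show m+1-1 = m by omega, show C₁-(m+1)+1 = C₁-m by omega] at s2
        have s3 := swap (C₁-1) m (C₁-(m+1)) (by omega) (by omega) h1
        rw [show C₁-(m+1)+1 = C₁-m by omega] at s3
        have hGp : Gf C₂ μ₁ μ₂ h₁ h₂ (C₁-(m+1)) = Gf C₂ μ₁ μ₂ h₁ h₂ (C₁-m) + h₂/((C₂:ℝ)*μ₂) := by
          have hh := Gf_pred C₂ μ₁ μ₂ h₁ h₂ hC₂pos hμ₂ (show C₂ ≤ C₁ - m by omega)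
          rw [show C₁-m-1 = C₁-(m+1) by omega] at hh
          exact hh
        have m1 : min (v 0 m (C₁-m)) (v 0 (m-1) (C₁-m+1))
            = v 0 (m-1) (C₁-m+1) + min (Gf C₂ μ₁ μ₂ h₁ h₂ (C₁-m)) 0 := by
          rw [min_shift, s1]
        have m2 : min (v 0 (m+1) (C₁-(m+1))) (v 0 m (C₁-m))
            = v 0 m (C₁-m) + min (Gf C₂ μ₁ μ₂ h₁ h₂ (C₁-(m+1))) 0 := by
          rw [min_shift, s2]
        have lip := phi_lip (x := Gf C₂ μ₁ μ₂ h₁ h₂ (C₁-m))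
          (show (0:ℝ) ≤ h₂/((C₂:ℝ)*μ₂) by positivity)
        rw [m1, m2, hGp]
        linarith [s1, s3, hGp, lip]
      have hWm' := hW0 (j-1) (by omega)
      rw [show j-1+1 = j by omega] at hWm'
      have hWj' := hW0 j hjK
      have hP2 := Pm0 j hj1 hjK
      have hP1 : ((j:ℝ)-1)*μ₁*((min (v 0 j (C₁-j)) (v 0 (j-1) (C₁-j+1)) - v 0 (j-1) (C₁-j))
          - (min (v 0 (j-1) (C₁-(j-1))) (v 0 (j-1-1) (C₁-(j-1)+1)) - v 0 (j-1-1) (C₁-(j-1)))) ≤ 0 := by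
        by_cases hj2 : 2 ≤ j
        · have hmono := Pm0 (j-1) (by omega) (by omega)
          rw [show j-1+1 = j by omega] at hmono
          have hc : (0:ℝ) ≤ ((j:ℝ)-1)*μ₁ := by
            have : (1:ℝ) ≤ (j:ℝ) := by exact_mod_cast hj1
            nlinarith
          nlinarith [hmono, hc]
        · have hje : j = 1 := by omega
          subst hje
          norm_num
      exact wstep μ₁ μ₂ h₀ hμ₁ hμ₂ hh₀ C₂ hC₂pos
        (fun m => min (v 0 m (C₁-m)) (v 0 (m-1) (C₁-m+1)) - v 0 (m-1) (C₁-m))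
        (fun m => v (0+1) m (C₁-m) - v 0 m (C₁-m)) j hj1 hWm' hWj' hP1 hP2
    | succ i ihM =>
      intro j hj1 hjK
      have hW1 : ∀ m, m ≤ K → v (i+1+1) m (C₁-m) - v (i+1) m (C₁-m)
          = h₀/((m:ℝ)*μ₁+(C₂:ℝ)*μ₂)
            + ((m:ℝ)*μ₁/((m:ℝ)*μ₁+(C₂:ℝ)*μ₂))
              * ((min (v (i+1) m (C₁-m)) (v (i+1) (m-1) (C₁-m+1)))
                  - (min (v i m (C₁-m)) (v i (m-1) (C₁-m+1))))
            + ((C₂:ℝ)*μ₂/((m:ℝ)*μ₁+(C₂:ℝ)*μ₂))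
              * ((min (v (i+1) (m+1) (C₁-(m+1))) (v (i+1) (m+1-1) (C₁-(m+1)+1)))
                  - (min (v i (m+1) (C₁-(m+1))) (v i (m+1-1) (C₁-(m+1)+1)))) := by
        intro m hm
        have et := hvi (i+1) m (C₁-m) (by omega)
        have eb := hvi i m (C₁-m) (by omega)
        rw [hds m hm, show min (C₁-m) C₂ = C₂ by omega] at et eb
        rw [show m+1-1 = m by omega, show C₁-(m+1)+1 = C₁-m by omega,
            show C₁-(m+1) = C₁-m-1 by omega]
        push_cast at et eb ⊢
        linear_combination et - eb
      have Pm1 : ∀ m, 1 ≤ m → m ≤ K →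
          ((min (v (i+1) (m+1) (C₁-(m+1))) (v (i+1) (m+1-1) (C₁-(m+1)+1)))
              - (min (v i (m+1) (C₁-(m+1))) (v i (m+1-1) (C₁-(m+1)+1))))
            ≤ ((min (v (i+1) m (C₁-m)) (v (i+1) (m-1) (C₁-m+1)))
              - (min (v i m (C₁-m)) (v i (m-1) (C₁-m+1)))) := by
        intro m h1 h2
        rw [show m+1-1 = m by omega, show C₁-(m+1)+1 = C₁-m by omega]
        -- (a) lower bound for P m
        have wlow := ihM m h1 h2
        rw [show C₁-(m-1) = C₁-m+1 by omega] at wlow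
        have hkey : (v i (m-1) (C₁-m+1) - v i m (C₁-m))
            ≤ (v (i+1) (m-1) (C₁-m+1) - v (i+1) m (C₁-m)) := by
          have hnn := hεnn (m-1) m
          linarith
        have pa : v (i+1) m (C₁-m) - v i m (C₁-m)
            ≤ (min (v (i+1) m (C₁-m)) (v (i+1) (m-1) (C₁-m+1)))
              - (min (v i m (C₁-m)) (v i (m-1) (C₁-m+1))) := by
          rw [min_shift' (v (i+1) m (C₁-m)) (v (i+1) (m-1) (C₁-m+1)),
              min_shift' (v i m (C₁-m)) (v i (m-1) (C₁-m+1))]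
          have hmono := phi_mono hkey
          linarith
        -- (b) upper bound for P (m+1)
        have pb : (min (v (i+1) (m+1) (C₁-(m+1))) (v (i+1) m (C₁-m)))
              - (min (v i (m+1) (C₁-(m+1))) (v i m (C₁-m)))
            ≤ v (i+1) m (C₁-m) - v i m (C₁-m) := by
          rw [min_shift (v (i+1) (m+1) (C₁-(m+1))) (v (i+1) m (C₁-m)),
              min_shift (v i (m+1) (C₁-(m+1))) (v i m (C₁-m))]
          rcases Nat.lt_or_ge m K with hmK | hmK
          · have wlow2 := ihM (m+1) (by omega) (by omega)
            rw [show m+1-1 = m by omega] at wlow2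
            have hnn2 := hεnn m (m+1)
            have hmono := phi_mono (show v (i+1) (m+1) (C₁-(m+1)) - v (i+1) m (C₁-m)
                ≤ v i (m+1) (C₁-(m+1)) - v i m (C₁-m) by linarith)
            linarith
          · have hmeq : m = K := by omega
            subst hmeq
            have t1 := S i (K+1) (by omega) (by omega)
            have t2 := S (i+1) (K+1) (by omega) (by omega)
            rw [show K+1-1 = K by omega] at t1 t2
            have z1 : min (v i (K+1) (C₁-(K+1)) - v i K (C₁-K)) 0 = 0 :=
              min_eq_right (by linarith)
            have z2 : min (v (i+1) (K+1) (C₁-(K+1)) - v (i+1) K (C₁-K)) 0 = 0 :=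
              min_eq_right (by linarith)
            rw [z1, z2]
            linarith
        linarith [pa, pb]
      have hWm' := hW1 (j-1) (by omega)
      rw [show j-1+1 = j by omega] at hWm'
      have hWj' := hW1 j hjK
      have hP2 := Pm1 j hj1 hjK
      have hP1 : ((j:ℝ)-1)*μ₁*(((min (v (i+1) j (C₁-j)) (v (i+1) (j-1) (C₁-j+1)))
            - (min (v i j (C₁-j)) (v i (j-1) (C₁-j+1))))
          - ((min (v (i+1) (j-1) (C₁-(j-1))) (v (i+1) (j-1-1) (C₁-(j-1)+1)))
            - (min (v i (j-1) (C₁-(j-1))) (v i (j-1-1) (C₁-(j-1)+1))))) ≤ 0 := by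
        by_cases hj2 : 2 ≤ j
        · have hmono := Pm1 (j-1) (by omega) (by omega)
          rw [show j-1+1 = j by omega] at hmono
          have hc : (0:ℝ) ≤ ((j:ℝ)-1)*μ₁ := by
            have : (1:ℝ) ≤ (j:ℝ) := by exact_mod_cast hj1
            nlinarith
          nlinarith [hmono, hc]
        · have hje : j = 1 := by omega
          subst hje
          norm_num
      exact wstep μ₁ μ₂ h₀ hμ₁ hμ₂ hh₀ C₂ hC₂pos
        (fun m => (min (v (i+1) m (C₁-m)) (v (i+1) (m-1) (C₁-m+1)))
              - (min (v i m (C₁-m)) (v i (m-1) (C₁-m+1))))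
        (fun m => v (i+1+1) m (C₁-m) - v (i+1) m (C₁-m)) j hj1 hWm' hWj' hP1 hP2
  -- final assembly
  set E : ℝ := h₀*μ₁/((((k-1:ℕ):ℝ)*μ₁+(C₂:ℝ)*μ₂)*((k:ℝ)*μ₁+(C₂:ℝ)*μ₂)) with hE
  have hεpos : (0:ℝ) < E := by
    rw [hE]
    exact div_pos (by positivity) (mul_pos (hdpos (k-1)) (hdpos k))
  have hDveq : ∀ i, Dv v i k (C₁-k) = v i k (C₁-k) - v i (k-1) (C₁-(k-1)) := by
    intro i
    rw [Dv, show C₁-k+1 = C₁-(k-1) by omega]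
  have step : ∀ i : ℕ, Dv v (i+1) k (C₁-k) ≤ Dv v i k (C₁-k) - E := by
    intro i
    have hM := M i k hk hkK
    rw [hDveq i, hDveq (i+1)]
    rw [hE]
    linarith
  constructor
  · intro i
    have := step i
    linarith [hεpos]
  · have decay : ∀ i : ℕ, Dv v i k (C₁-k) ≤ Dv v 0 k (C₁-k) - (i:ℝ)*E := by
      intro i
      induction i with
      | zero => norm_num
      | succ n ihd =>
        have := step n
        push_cast
        push_cast at ihd
        linarith
    obtain ⟨I, hI⟩ := exists_nat_gt (Dv v 0 k (C₁-k) / E)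
    have hneg : ∀ i, I ≤ i → Dv v i k (C₁-k) < 0 := by
      intro i hi
      have h1 : Dv v 0 k (C₁-k) < (I:ℝ)*E := by
        rw [div_lt_iff₀ hεpos] at hI
        linarith
      have h2 : (I:ℝ)*E ≤ (i:ℝ)*E := by
        apply mul_le_mul_of_nonneg_right _ hεpos.le
        exact_mod_cast hi
      have := decay i
      linarith
    classical
    have hexN : ∃ n, Dv v n k (C₁-k) ≤ 0 := ⟨I, (hneg I le_rfl).le⟩
    refine ⟨Nat.find hexN, fun i => ⟨fun h => Nat.find_min' hexN h, fun h => ?_⟩, I, hneg⟩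
    have anti : ∀ a b : ℕ, a ≤ b → Dv v b k (C₁-k) ≤ Dv v a k (C₁-k) := by
      intro a b hab
      induction b, hab using Nat.le_induction with
      | base => exact le_rfl
      | succ n hn ihn =>
        have := step n
        linarith [hεpos]
    exact (anti (Nat.find hexN) i h).trans (Nat.find_spec hexN)
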